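/- Let V : ℝ^d → ℝ be bounded Lipschitz, θ > 0, μ ∈ P₁(ℝ^d). Suppose (S_n) is a nondecreasing sequence of subsets of P₁(ℝ^d) (each closed under the problem's constraints) and (μ_n) with μ_n ∈ S_n, W₁(μ_n, μ) → 0, such that for every ρ ∈ P₁(ℝ^d) there exist ρ_n ∈ S_n with W₁(ρ_n, ρ) → 0. Let v_n = inf{∫ V dν : ν ∈ S_n, W₁(ν, μ_n) ≤ θ} and v = inf{∫ V dν : ν ∈ P₁(ℝ^d), W₁(ν, μ) ≤ θ}. Then v_n → v. -/

import Mathlib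

open MeasureTheory Metric Set Filter Topology ENNReal NNReal ProbabilityTheory
set_option linter.unusedSectionVars false
set_option maxHeartbeats 1000000

/-- The 1-Wasserstein distance between two measures on a metric measurable
space, defined as the infimum of the transport cost over all couplings. -/
noncomputable def W1 {X : Type*} [MeasurableSpace X] [PseudoMetricSpace X]
    (μ ν : Measure X) : ℝ≥0∞ :=
  ⨅ (π : Measure (X × X)) (_ : π.map Prod.fst = μ) (_ : π.map Prod.snd = ν),
    ∫⁻ p, ENNReal.ofReal (dist p.1 p.2) ∂π

section AuxLemmas
variable {X : Type*} [MeasurableSpace X] [PseudoMetricSpace X] [OpensMeasurableSpace X]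
  [SecondCountableTopology X]

lemma W1_le {μ ν : Measure X} {π : Measure (X × X)} (h1 : π.map Prod.fst = μ)
    (h2 : π.map Prod.snd = ν) : W1 μ ν ≤ ∫⁻ p, ENNReal.ofReal (dist p.1 p.2) ∂π :=
  iInf₂_le_of_le π h1 (iInf_le _ h2)

lemma coupling_isProb {μ : Measure X} {π : Measure (X × X)} [IsProbabilityMeasure μ]
    (h1 : π.map Prod.fst = μ) : IsProbabilityMeasure π := by
  constructor
  have := congrArg (fun m : Measure X => m univ) h1
  simpa [Measure.map_apply measurable_fst MeasurableSet.univ] using this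

lemma measurable_cost : Measurable (fun p : X × X => ENNReal.ofReal (dist p.1 p.2)) :=
  (measurable_fst.dist measurable_snd).ennreal_ofReal

lemma measurable_diag_pair : Measurable (fun x : X => (x, x)) := by
  exact measurable_id.prodMk measurable_id

lemma diag_cost (μ : Measure X) :
    ∫⁻ p, ENNReal.ofReal (dist p.1 p.2) ∂(μ.map (fun x => (x, x))) = 0 := by
  rw [lintegral_map measurable_cost measurable_diag_pair]
  simp

lemma diag_fst (μ : Measure X) : (μ.map (fun x => (x, x))).map Prod.fst = μ := by
  rw [Measure.map_map measurable_fst measurable_diag_pair]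
  have : (Prod.fst ∘ fun x : X => (x, x)) = id := rfl
  rw [this, Measure.map_id]

lemma diag_snd (μ : Measure X) : (μ.map (fun x => (x, x))).map Prod.snd = μ := by
  rw [Measure.map_map measurable_snd measurable_diag_pair]
  have : (Prod.snd ∘ fun x : X => (x, x)) = id := rfl
  rw [this, Measure.map_id]

lemma W1_self (μ : Measure X) : W1 μ μ = 0 :=
  le_antisymm ((W1_le (diag_fst μ) (diag_snd μ)).trans (diag_cost μ).le) zero_le

lemma W1_comm_le (μ ν : Measure X) : W1 μ ν ≤ W1 ν μ := by
  refine le_iInf fun π => le_iInf fun h1 => le_iInf fun h2 => ?_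
  have hswap : Measurable (Prod.swap : X × X → X × X) := measurable_swap
  refine (W1_le (π := π.map Prod.swap) ?_ ?_).trans ?_
  · rw [Measure.map_map measurable_fst hswap]; exact h2
  · rw [Measure.map_map measurable_snd hswap]; exact h1
  · rw [lintegral_map measurable_cost hswap]
    simp [dist_comm]

lemma W1_comm (μ ν : Measure X) : W1 μ ν = W1 ν μ :=
  le_antisymm (W1_comm_le μ ν) (W1_comm_le ν μ)

section Glue
variable [StandardBorelSpace X] [Nonempty X]

lemma glue_couplings (π₁ π₂ : Measure (X × X)) [IsProbabilityMeasure π₁] [IsProbabilityMeasure π₂]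
    (h : π₁.map Prod.snd = π₂.map Prod.fst) :
    ∃ π : Measure (X × X), π.map Prod.fst = π₁.map Prod.fst ∧
      π.map Prod.snd = π₂.map Prod.snd ∧
      ∫⁻ p, ENNReal.ofReal (dist p.1 p.2) ∂π ≤
        ∫⁻ p, ENNReal.ofReal (dist p.1 p.2) ∂π₁ +
          ∫⁻ p, ENNReal.ofReal (dist p.1 p.2) ∂π₂ := by
  set κ : Kernel X X := π₂.condKernel with hκ
  set η : Kernel (X × X) X := κ.comap Prod.snd measurable_snd with hη
  haveI : IsMarkovKernel κ := by rw [hκ]; infer_instance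
  haveI : IsMarkovKernel η := by rw [hη]; infer_instance
  set τ : Measure ((X × X) × X) := π₁ ⊗ₘ η with hτ
  have hf : Measurable (fun p : (X × X) × X => (p.1.1, p.2)) :=
    (measurable_fst.comp measurable_fst).prodMk measurable_snd
  have hdis : π₂.fst ⊗ₘ κ = π₂ := π₂.disintegrate κ
  have hτfst : τ.map Prod.fst = π₁ := Measure.fst_compProd π₁ η
  have hval : ∀ s : Set X, MeasurableSet s →
      π₂ (Prod.snd ⁻¹' s) = ∫⁻ y, κ y s ∂(π₂.fst) := by
    intro s hs
    conv_lhs => rw [← hdis]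
    rw [Measure.compProd_apply (measurable_snd hs)]
    rfl
  refine ⟨τ.map (fun p => (p.1.1, p.2)), ?_, ?_, ?_⟩
  · rw [Measure.map_map measurable_fst hf]
    have : (Prod.fst ∘ fun p : (X × X) × X => (p.1.1, p.2)) = Prod.fst ∘ Prod.fst := rfl
    rw [this, ← Measure.map_map measurable_fst measurable_fst, hτfst]
  · rw [Measure.map_map measurable_snd hf]
    have : (Prod.snd ∘ fun p : (X × X) × X => (p.1.1, p.2)) = Prod.snd := rfl
    rw [this]
    ext s hs
    rw [Measure.map_apply measurable_snd hs, Measure.map_apply measurable_snd hs,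
      hτ, Measure.compProd_apply (measurable_snd hs)]
    have e1 : ∀ q : X × X, η q (Prod.mk q ⁻¹' (Prod.snd ⁻¹' s)) = κ q.2 s := by
      intro q; rw [hη, Kernel.comap_apply]; rfl
    simp_rw [e1]
    rw [← lintegral_map (κ.measurable_coe hs) measurable_snd, h, hval s hs]
    rfl
  · rw [lintegral_map measurable_cost hf]
    have hmeas1 : Measurable (fun p : (X × X) × X => ENNReal.ofReal (dist p.1.1 p.1.2)) :=
      measurable_cost.comp measurable_fst
    have hmeas2 : Measurable (fun p : (X × X) × X => ENNReal.ofReal (dist p.1.2 p.2)) :=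
      (measurable_fst.snd.dist measurable_snd).ennreal_ofReal
    have step1 : ∫⁻ p, ENNReal.ofReal (dist p.1.1 p.2) ∂τ ≤
        ∫⁻ p, (ENNReal.ofReal (dist p.1.1 p.1.2) + ENNReal.ofReal (dist p.1.2 p.2)) ∂τ := by
      refine lintegral_mono fun p => ?_
      rw [← ENNReal.ofReal_add dist_nonneg dist_nonneg]
      exact ENNReal.ofReal_le_ofReal (dist_triangle _ _ _)
    refine step1.trans ?_
    rw [lintegral_add_left hmeas1]
    refine add_le_add (le_of_eq ?_) (le_of_eq ?_)
    · rw [← hτfst, lintegral_map measurable_cost measurable_fst]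
    · rw [hτ, Measure.lintegral_compProd hmeas2]
      have e1 : ∀ q : X × X, ∫⁻ z, ENNReal.ofReal (dist q.2 z) ∂(η q)
          = ∫⁻ z, ENNReal.ofReal (dist q.2 z) ∂(κ q.2) := by
        intro q; rw [hη, Kernel.comap_apply]
      simp_rw [e1]
      have hg : Measurable (fun y : X => ∫⁻ z, ENNReal.ofReal (dist y z) ∂(κ y)) :=
        Measurable.lintegral_kernel_prod_right' measurable_cost
      rw [← lintegral_map hg measurable_snd, h]
      have : π₂.map Prod.fst = π₂.fst := rfl
      rw [this]
      conv_rhs => rw [← hdis]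
      rw [Measure.lintegral_compProd measurable_cost]

lemma W1_triangle (μ ν ρ : Measure X) [IsProbabilityMeasure μ] [IsProbabilityMeasure ν]
    [IsProbabilityMeasure ρ] : W1 μ ρ ≤ W1 μ ν + W1 ν ρ := by
  refine ENNReal.le_of_forall_pos_le_add fun ε hε htop => ?_
  have h1 : W1 μ ν < W1 μ ν + ε / 2 := by
    refine ENNReal.lt_add_right ?_ ?_
    · exact ne_top_of_le_ne_top htop.ne le_self_add
    · simpa using hε.ne'
  have h2 : W1 ν ρ < W1 ν ρ + ε / 2 := by
    refine ENNReal.lt_add_right ?_ ?_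
    · exact ne_top_of_le_ne_top htop.ne le_add_self
    · simpa using hε.ne'
  rw [W1] at h1 h2
  simp only [iInf_lt_iff] at h1 h2
  obtain ⟨π₁, hm11, hm12, hc1⟩ := h1
  obtain ⟨π₂, hm21, hm22, hc2⟩ := h2
  haveI := coupling_isProb hm11
  haveI := coupling_isProb hm21
  obtain ⟨π, hf, hs, hc⟩ := glue_couplings π₁ π₂ (by rw [hm12, hm21])
  have : W1 μ ρ ≤ ∫⁻ p, ENNReal.ofReal (dist p.1 p.2) ∂π :=
    W1_le (by rw [hf, hm11]) (by rw [hs, hm22])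
  refine this.trans (hc.trans ?_)
  calc ∫⁻ p, ENNReal.ofReal (dist p.1 p.2) ∂π₁ + ∫⁻ p, ENNReal.ofReal (dist p.1 p.2) ∂π₂
      ≤ (W1 μ ν + ε / 2) + (W1 ν ρ + ε / 2) := add_le_add hc1.le hc2.le
    _ = W1 μ ν + W1 ν ρ + ε := by
        rw [add_add_add_comm, ENNReal.add_halves]

end Glue

section Integral
variable {K : ℝ≥0} {V : X → ℝ} {C : ℝ}

lemma integrable_V (hV : Continuous V) (hbd : ∀ x, |V x| ≤ C) (ν : Measure X)
    [IsProbabilityMeasure ν] : Integrable V ν :=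
  (integrable_const C).mono' hV.aestronglyMeasurable
    (ae_of_all _ fun x => by simpa [Real.norm_eq_abs] using hbd x)

lemma abs_integral_V_le (hbd : ∀ x, |V x| ≤ C) (ν : Measure X)
    [IsProbabilityMeasure ν] : |∫ x, V x ∂ν| ≤ C := by
  have := norm_integral_le_of_norm_le_const (μ := ν) (f := V) (C := C)
    (ae_of_all _ fun x => by simpa [Real.norm_eq_abs] using hbd x)
  simpa [Real.norm_eq_abs] using this

lemma abs_integral_sub_le_of_W1_lt (hLip : LipschitzWith K V) (hbd : ∀ x, |V x| ≤ C)
    {α β : Measure X} [IsProbabilityMeasure α] [IsProbabilityMeasure β] {δ : ℝ}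
    (h : W1 α β < ENNReal.ofReal δ) :
    |∫ x, V x ∂α - ∫ x, V x ∂β| ≤ K * δ := by
  have hδ : 0 ≤ δ := by
    by_contra h'
    rw [ENNReal.ofReal_eq_zero.2 (le_of_lt (not_le.1 h'))] at h
    simp at h
  rw [W1] at h
  simp only [iInf_lt_iff] at h
  obtain ⟨π, h1, h2, hc⟩ := h
  haveI := coupling_isProb h1
  have hVm : AEStronglyMeasurable V (π.map Prod.fst) := hLip.continuous.aestronglyMeasurable
  have hVm2 : AEStronglyMeasurable V (π.map Prod.snd) := hLip.continuous.aestronglyMeasurable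
  have hIα : ∫ x, V x ∂α = ∫ p, V p.1 ∂π := by
    rw [← h1, integral_map measurable_fst.aemeasurable hVm]
  have hIβ : ∫ x, V x ∂β = ∫ p, V p.2 ∂π := by
    rw [← h2, integral_map measurable_snd.aemeasurable hVm2]
  have hdint : Integrable (fun p : X × X => dist p.1 p.2) π := by
    refine ⟨(measurable_fst.dist measurable_snd).aestronglyMeasurable, ?_⟩
    rw [hasFiniteIntegral_iff_ofReal (ae_of_all _ fun p => dist_nonneg)]
    exact hc.trans_le le_top
  have hint_dist : ∫ p, dist p.1 p.2 ∂π ≤ δ := by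
    rw [integral_eq_lintegral_of_nonneg_ae (ae_of_all _ fun p => dist_nonneg)
      (measurable_fst.dist measurable_snd).aestronglyMeasurable]
    have := ENNReal.toReal_le_toReal (hc.trans_le le_top).ne ENNReal.ofReal_ne_top |>.2 hc.le
    rwa [ENNReal.toReal_ofReal hδ] at this
  have h1' : Integrable (fun p : X × X => V p.1) π := by
    have := (integrable_map_measure hVm measurable_fst.aemeasurable).1
      (by rw [h1]; exact integrable_V hLip.continuous hbd α)
    exact this
  have h2' : Integrable (fun p : X × X => V p.2) π := by
    have := (integrable_map_measure hVm2 measurable_snd.aemeasurable).1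
      (by rw [h2]; exact integrable_V hLip.continuous hbd β)
    exact this
  calc |∫ x, V x ∂α - ∫ x, V x ∂β| = |∫ p, (V p.1 - V p.2) ∂π| := by
        rw [hIα, hIβ, integral_sub h1' h2']
    _ ≤ ∫ p, |V p.1 - V p.2| ∂π := by
        simpa [Real.norm_eq_abs] using
          norm_integral_le_integral_norm (μ := π) (f := fun p : X × X => V p.1 - V p.2)
    _ ≤ ∫ p, (K : ℝ) * dist p.1 p.2 ∂π := by
        refine integral_mono (h1'.sub h2').abs (hdint.const_mul _) fun p => ?_
        have := hLip.dist_le_mul p.1 p.2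
        rwa [Real.dist_eq] at this
    _ = (K : ℝ) * ∫ p, dist p.1 p.2 ∂π := integral_const_mul _ _
    _ ≤ (K : ℝ) * δ := mul_le_mul_of_nonneg_left hint_dist K.2

end Integral

section Mix

lemma mix_isProb (ν μ : Measure X) [IsProbabilityMeasure ν] [IsProbabilityMeasure μ]
    {t : ℝ} (ht0 : 0 ≤ t) (ht1 : t ≤ 1) :
    IsProbabilityMeasure (ENNReal.ofReal (1 - t) • ν + ENNReal.ofReal t • μ) := by
  constructor
  simp only [Measure.add_apply, Measure.smul_apply, smul_eq_mul, measure_univ, mul_one]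
  rw [← ENNReal.ofReal_add (by linarith) ht0]
  norm_num

lemma mix_integrable {f : X → ℝ} {ν μ : Measure X} (hf1 : Integrable f ν)
    (hf2 : Integrable f μ) (t : ℝ) :
    Integrable f (ENNReal.ofReal (1 - t) • ν + ENNReal.ofReal t • μ) :=
  (hf1.smul_measure ENNReal.ofReal_ne_top).add_measure
    (hf2.smul_measure ENNReal.ofReal_ne_top)

lemma mix_integral {f : X → ℝ} {ν μ : Measure X} (hf1 : Integrable f ν)
    (hf2 : Integrable f μ) {t : ℝ} (ht0 : 0 ≤ t) (ht1 : t ≤ 1) :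
    ∫ x, f x ∂(ENNReal.ofReal (1 - t) • ν + ENNReal.ofReal t • μ)
      = (1 - t) * ∫ x, f x ∂ν + t * ∫ x, f x ∂μ := by
  rw [integral_add_measure (hf1.smul_measure ENNReal.ofReal_ne_top)
      (hf2.smul_measure ENNReal.ofReal_ne_top),
    integral_smul_measure, integral_smul_measure,
    ENNReal.toReal_ofReal (by linarith : (0:ℝ) ≤ 1 - t), ENNReal.toReal_ofReal ht0]
  simp [smul_eq_mul]

lemma W1_mix_le {ν μ : Measure X} {t s : ℝ} (ht0 : 0 ≤ t) (ht1 : t ≤ 1)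
    (h : W1 ν μ < ENNReal.ofReal s) :
    W1 (ENNReal.ofReal (1 - t) • ν + ENNReal.ofReal t • μ) μ
      ≤ ENNReal.ofReal ((1 - t) * s) := by
  rw [W1] at h
  simp only [iInf_lt_iff] at h
  obtain ⟨π, h1, h2, hc⟩ := h
  set π' : Measure (X × X) :=
    ENNReal.ofReal (1 - t) • π + ENNReal.ofReal t • (μ.map (fun x => (x, x))) with hπ'
  have hfst : π'.map Prod.fst = ENNReal.ofReal (1 - t) • ν + ENNReal.ofReal t • μ := by
    rw [hπ', Measure.map_add _ _ measurable_fst, Measure.map_smul, Measure.map_smul,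
      h1, diag_fst]
  have hsnd : π'.map Prod.snd = μ := by
    rw [hπ', Measure.map_add _ _ measurable_snd, Measure.map_smul, Measure.map_smul,
      h2, diag_snd, ← add_smul, ← ENNReal.ofReal_add (by linarith) ht0]
    norm_num
  refine (W1_le hfst hsnd).trans ?_
  rw [hπ', lintegral_add_measure, lintegral_smul_measure, lintegral_smul_measure,
    diag_cost, smul_zero, add_zero, ENNReal.ofReal_mul (by linarith : (0:ℝ) ≤ 1 - t)]
  exact mul_le_mul_right hc.le _

end Mix
end AuxLemmas

/-- The distributionally robust value: the infimum of `∫ V dν` over probability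
measures `ν` on `ℝ^d` with finite first moment lying in the closed
1-Wasserstein ball of radius `r` around `μ`. -/
noncomputable def robustVal (d : ℕ) (V : EuclideanSpace ℝ (Fin d) → ℝ)
    (μ : Measure (EuclideanSpace ℝ (Fin d))) (r : ℝ) : ℝ :=
  sInf {s | ∃ ν : Measure (EuclideanSpace ℝ (Fin d)), IsProbabilityMeasure ν ∧
    Integrable (fun x => ‖x‖) ν ∧ W1 ν μ ≤ ENNReal.ofReal r ∧ s = ∫ x, V x ∂ν}

/-- Abstract form of the main convergence theorem: if `(Sₙ)` is a nondecreasing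
sequence of sets of probability measures with finite first moment which
approximates every such measure in `W₁`, and `μₙ ∈ Sₙ` with `W₁(μₙ, μ) → 0`,
then the restricted robust values
`vₙ = inf {∫ V dν : ν ∈ Sₙ, W₁(ν, μₙ) ≤ θ}` converge to the unrestricted
robust value `v = inf {∫ V dν : W₁(ν, μ) ≤ θ}`. -/
theorem robustVal_filtration_convergence (d : ℕ)
    (V : EuclideanSpace ℝ (Fin d) → ℝ) (K : ℝ≥0) (hLip : LipschitzWith K V)
    (C : ℝ) (hbd : ∀ x, |V x| ≤ C) (θ : ℝ) (hθ : 0 < θ)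
    (μ : Measure (EuclideanSpace ℝ (Fin d))) (hμ : IsProbabilityMeasure μ)
    (hμ1 : Integrable (fun x => ‖x‖) μ)
    (S : ℕ → Set (Measure (EuclideanSpace ℝ (Fin d)))) (hSmono : Monotone S)
    (hSP : ∀ n, ∀ ν ∈ S n, IsProbabilityMeasure ν ∧ Integrable (fun x => ‖x‖) ν)
    (μn : ℕ → Measure (EuclideanSpace ℝ (Fin d))) (hμnS : ∀ n, μn n ∈ S n)
    (hμnconv : Tendsto (fun n => W1 (μn n) μ) atTop (nhds 0))
    (happrox : ∀ ρ : Measure (EuclideanSpace ℝ (Fin d)),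
      IsProbabilityMeasure ρ → Integrable (fun x => ‖x‖) ρ →
        ∃ ρn : ℕ → Measure (EuclideanSpace ℝ (Fin d)), (∀ n, ρn n ∈ S n) ∧
          Tendsto (fun n => W1 (ρn n) ρ) atTop (nhds 0)) :
    Tendsto (fun n => sInf {r | ∃ ν ∈ S n,
        W1 ν (μn n) ≤ ENNReal.ofReal θ ∧ r = ∫ x, V x ∂ν}) atTop
      (nhds (robustVal d V μ θ)) := by
  haveI := hμ
  have hC0 : 0 ≤ C := le_trans (abs_nonneg _) (hbd 0)
  set B : Set ℝ := {s | ∃ ν : Measure (EuclideanSpace ℝ (Fin d)), IsProbabilityMeasure ν ∧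
    Integrable (fun x => ‖x‖) ν ∧ W1 ν μ ≤ ENNReal.ofReal θ ∧ s = ∫ x, V x ∂ν} with hB
  have hvB : robustVal d V μ θ = sInf B := rfl
  set v := robustVal d V μ θ with hvdef
  have hBne : B.Nonempty :=
    ⟨∫ x, V x ∂μ, μ, hμ, hμ1, by rw [W1_self]; exact zero_le, rfl⟩
  have hBbd : ∀ r ∈ B, -C ≤ r := by
    rintro r ⟨ν, hp, hi, hw, rfl⟩
    haveI := hp
    have := abs_integral_V_le hbd ν
    linarith [(abs_le.1 this).1]
  have hBbdd : BddBelow B := ⟨-C, hBbd⟩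
  set A : ℕ → Set ℝ := fun n => {r | ∃ ν ∈ S n,
      W1 ν (μn n) ≤ ENNReal.ofReal θ ∧ r = ∫ x, V x ∂ν} with hA
  have hAne : ∀ n, (A n).Nonempty := fun n =>
    ⟨∫ x, V x ∂(μn n), μn n, hμnS n, by rw [W1_self]; exact zero_le, rfl⟩
  have hAbd : ∀ n, ∀ r ∈ A n, -C ≤ r := by
    rintro n r ⟨ν, hν, hw, rfl⟩
    haveI := (hSP n ν hν).1
    have := abs_integral_V_le hbd ν
    linarith [(abs_le.1 this).1]
  have hAbdd : ∀ n, BddBelow (A n) := fun n => ⟨-C, hAbd n⟩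
  rw [Metric.tendsto_atTop]
  intro ε hε
  -- the mixing parameter
  set t : ℝ := min (1/2) (ε / (8 * (C + 1))) with htdef
  have ht0 : 0 < t := lt_min (by norm_num) (by positivity)
  have ht2 : t ≤ 1/2 := min_le_left _ _
  have ht1 : t ≤ 1 := ht2.trans (by norm_num)
  have h2Ct : 2 * C * t ≤ ε / 4 := by
    have h1 : t ≤ ε / (8 * (C + 1)) := min_le_right _ _
    have h2 : (0:ℝ) < 8 * (C + 1) := by linarith
    rw [le_div_iff₀ h2] at h1
    nlinarith
  -- Lower bound preparation: for any n with `W1 (μn n) μ < ofReal (t*θ)`,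
  -- we have `v - ε/4 ≤ sInf (A n)`.
  have hlow : ∀ n, W1 (μn n) μ < ENNReal.ofReal (t * θ) → v - ε / 4 ≤ sInf (A n) := by
    intro n hWn
    refine le_csInf (hAne n) ?_
    rintro r ⟨ν, hν, hw, rfl⟩
    haveI hνp := (hSP n ν hν).1
    haveI := (hSP n (μn n) (hμnS n)).1
    have hνi := (hSP n ν hν).2
    have htri : W1 ν μ ≤ W1 ν (μn n) + W1 (μn n) μ := W1_triangle _ _ _
    have hWνμ : W1 ν μ < ENNReal.ofReal (θ + t * θ) := by
      refine htri.trans_lt ?_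
      calc W1 ν (μn n) + W1 (μn n) μ
          ≤ ENNReal.ofReal θ + W1 (μn n) μ := add_le_add_left hw _
        _ < ENNReal.ofReal θ + ENNReal.ofReal (t * θ) :=
            ENNReal.add_lt_add_left ENNReal.ofReal_ne_top hWn
        _ = ENNReal.ofReal (θ + t * θ) :=
            (ENNReal.ofReal_add hθ.le (by positivity)).symm
    set m : Measure (EuclideanSpace ℝ (Fin d)) :=
      ENNReal.ofReal (1 - t) • ν + ENNReal.ofReal t • μ with hm
    haveI : IsProbabilityMeasure m := mix_isProb ν μ ht0.le ht1
    have hmint : Integrable (fun x => ‖x‖) m := mix_integrable hνi hμ1 t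
    have hmW : W1 m μ ≤ ENNReal.ofReal θ := by
      refine (W1_mix_le ht0.le ht1 hWνμ).trans (ENNReal.ofReal_le_ofReal ?_)
      nlinarith [mul_nonneg (mul_nonneg ht0.le ht0.le) hθ.le]
    have hmem : ∫ x, V x ∂m ∈ B := ⟨m, inferInstance, hmint, hmW, rfl⟩
    have hvle : v ≤ ∫ x, V x ∂m := by rw [hvB]; exact csInf_le hBbdd hmem
    have hint : ∫ x, V x ∂m = (1 - t) * ∫ x, V x ∂ν + t * ∫ x, V x ∂μ :=
      mix_integral (integrable_V hLip.continuous hbd ν) (integrable_V hLip.continuous hbd μ)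
        ht0.le ht1
    have hb1 := abs_le.1 (abs_integral_V_le hbd ν)
    have hb2 := abs_le.1 (abs_integral_V_le hbd μ)
    have : ∫ x, V x ∂m ≤ ∫ x, V x ∂ν + ε / 4 := by
      rw [hint]; nlinarith [hb1.1, hb1.2, hb2.1, hb2.2]
    linarith
  -- Upper bound preparation
  obtain ⟨r₀, hr₀B, hr₀lt⟩ := exists_lt_of_csInf_lt hBne
    (show sInf B < v + ε / 4 by rw [← hvB]; linarith [hε])
  obtain ⟨ν₀, hν₀p, hν₀i, hν₀W, rfl⟩ := hr₀B
  haveI := hν₀p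
  set m' : Measure (EuclideanSpace ℝ (Fin d)) :=
    ENNReal.ofReal (1 - t) • ν₀ + ENNReal.ofReal t • μ with hm'
  haveI : IsProbabilityMeasure m' := mix_isProb ν₀ μ ht0.le ht1
  have hm'int : Integrable (fun x => ‖x‖) m' := mix_integrable hν₀i hμ1 t
  have hν₀W' : W1 ν₀ μ < ENNReal.ofReal (θ * (1 + t / 2)) := by
    refine hν₀W.trans_lt ((ENNReal.ofReal_lt_ofReal_iff (by positivity)).2 ?_)
    nlinarith
  have hm'W : W1 m' μ ≤ ENNReal.ofReal ((1 - t / 2) * θ) := by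
    refine (W1_mix_le ht0.le ht1 hν₀W').trans (ENNReal.ofReal_le_ofReal ?_)
    nlinarith [mul_nonneg (mul_nonneg ht0.le ht0.le) hθ.le]
  have hm'val : ∫ x, V x ∂m' ≤ v + ε / 4 + ε / 4 := by
    have hint : ∫ x, V x ∂m' = (1 - t) * ∫ x, V x ∂ν₀ + t * ∫ x, V x ∂μ :=
      mix_integral (integrable_V hLip.continuous hbd ν₀) (integrable_V hLip.continuous hbd μ)
        ht0.le ht1
    have hb1 := abs_le.1 (abs_integral_V_le hbd ν₀)
    have hb2 := abs_le.1 (abs_integral_V_le hbd μ)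
    rw [hint]; nlinarith [hb1.1, hb1.2, hb2.1, hb2.2]
  obtain ⟨ρ, hρS, hρconv⟩ := happrox m' inferInstance hm'int
  set δ2 : ℝ := min (t * θ / 4) (ε / (4 * ((K : ℝ) + 1))) with hδ2def
  have hδ2pos : 0 < δ2 := lt_min (by positivity) (by positivity)
  have hev1 : ∀ᶠ n in atTop, W1 (μn n) μ < ENNReal.ofReal (t * θ) :=
    hμnconv.eventually_lt_const (by simp [ENNReal.ofReal_pos]; positivity)
  have hev2 : ∀ᶠ n in atTop, W1 (μn n) μ < ENNReal.ofReal (t * θ / 4) :=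
    hμnconv.eventually_lt_const (by simp [ENNReal.ofReal_pos]; positivity)
  have hev3 : ∀ᶠ n in atTop, W1 (ρ n) m' < ENNReal.ofReal δ2 :=
    hρconv.eventually_lt_const (by simp [ENNReal.ofReal_pos]; positivity)
  obtain ⟨N, hN⟩ := eventually_atTop.1 ((hev1.and hev2).and hev3)
  refine ⟨N, fun n hn => ?_⟩
  obtain ⟨⟨hn1, hn2⟩, hn3⟩ := hN n hn
  -- upper bound for this n
  haveI := (hSP n (ρ n) (hρS n)).1
  haveI := (hSP n (μn n) (hμnS n)).1
  have hρW : W1 (ρ n) (μn n) ≤ ENNReal.ofReal θ := by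
    have t1 : W1 (ρ n) (μn n) ≤ W1 (ρ n) m' + W1 m' (μn n) := W1_triangle _ _ _
    have t2 : W1 m' (μn n) ≤ W1 m' μ + W1 μ (μn n) := W1_triangle _ _ _
    have hcomm : W1 μ (μn n) = W1 (μn n) μ := W1_comm _ _
    calc W1 (ρ n) (μn n) ≤ W1 (ρ n) m' + (W1 m' μ + W1 μ (μn n)) :=
          t1.trans (add_le_add_right t2 _)
      _ ≤ ENNReal.ofReal δ2 + (ENNReal.ofReal ((1 - t / 2) * θ)
            + ENNReal.ofReal (t * θ / 4)) := by
          refine add_le_add hn3.le (add_le_add hm'W ?_)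
          rw [hcomm]; exact hn2.le
      _ ≤ ENNReal.ofReal (t * θ / 4) + (ENNReal.ofReal ((1 - t / 2) * θ)
            + ENNReal.ofReal (t * θ / 4)) := by
          gcongr
          exact min_le_left _ _
      _ = ENNReal.ofReal (t * θ / 4 + ((1 - t / 2) * θ + t * θ / 4)) := by
          have h1 : (0:ℝ) ≤ t * θ / 4 := by nlinarith [mul_pos ht0 hθ]
          have h2 : (0:ℝ) ≤ (1 - t / 2) * θ := by nlinarith
          rw [ENNReal.ofReal_add h1 (by nlinarith), ENNReal.ofReal_add h2 h1]
      _ ≤ ENNReal.ofReal θ := ENNReal.ofReal_le_ofReal (by nlinarith)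
  have hmemA : ∫ x, V x ∂(ρ n) ∈ A n := ⟨ρ n, hρS n, hρW, rfl⟩
  have hup1 : sInf (A n) ≤ ∫ x, V x ∂(ρ n) := csInf_le (hAbdd n) hmemA
  have hclose : |∫ x, V x ∂(ρ n) - ∫ x, V x ∂m'| ≤ (K : ℝ) * δ2 :=
    abs_integral_sub_le_of_W1_lt hLip hbd hn3
  have hKδ : (K : ℝ) * δ2 ≤ ε / 4 := by
    have h1 : δ2 ≤ ε / (4 * ((K : ℝ) + 1)) := min_le_right _ _
    have hK1 : (0:ℝ) < (K : ℝ) + 1 := by positivity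
    have h2 : (K : ℝ) * δ2 ≤ (K : ℝ) * (ε / (4 * ((K : ℝ) + 1))) :=
      mul_le_mul_of_nonneg_left h1 K.2
    refine h2.trans ?_
    rw [mul_div_assoc', div_le_div_iff₀ (by positivity) (by norm_num)]
    nlinarith [K.2, hε.le]
  have hup : sInf (A n) ≤ v + 3 * ε / 4 := by
    have := (abs_le.1 hclose).2
    linarith
  have hlo := hlow n hn1
  rw [Real.dist_eq]
  have habs : |sInf (A n) - v| ≤ 3 * ε / 4 := abs_le.2 ⟨by linarith, by linarith⟩
  linarith
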